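/- For every integer i ≥ 1 there exists a finite partially ordered set (V, ≤) with exactly 2^{i+1} elements whose maximum chain has size 2 (height β_1 = 2), together with a greedy antichain sequence A_1, …, A_{i+2} of pairwise disjoint antichains that partitions V into exactly i + 2 antichains; in particular, the number of antichains used by this greedy partition equals log_2(|V|) + 1, a Θ(log |V|) factor more than the optimal antichain partition into β_1 = 2 antichains. -/

import Mathlib

/-- A greedy antichain sequence: pairwise disjoint antichains `A 0, …, A (m-1)` such that
each `A i` has maximum cardinality among all antichains contained in the complement of
the previously chosen antichains. -/
def GreedyAntichainSeq (V : Type) [DecidableEq V] [PartialOrder V]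
    {m : ℕ} (A : Fin m → Finset V) : Prop :=
  (∀ i, IsAntichain (· ≤ ·) ((A i : Finset V) : Set V)) ∧
  (∀ i j, i ≠ j → Disjoint (A i) (A j)) ∧
  (∀ (i : Fin m) (B : Finset V), IsAntichain (· ≤ ·) ((B : Finset V) : Set V) →
    (∀ v ∈ B, ∀ j, j < i → v ∉ A j) → B.card ≤ (A i).card)

/-- The height `β_1`: the maximum cardinality of a chain. -/
noncomputable def heightVal (V : Type) [Fintype V] [DecidableEq V] [PartialOrder V] : ℕ :=
  sSup {n : ℕ | ∃ C : Finset V,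
    IsChain (· ≤ ·) ((C : Finset V) : Set V) ∧ n = C.card}

def GreedyAntichainPartitionLowerBound (V : Type) [Fintype V] [DecidableEq V]
    [PartialOrder V] (i : ℕ) : Prop :=
  Fintype.card V = 2 ^ (i + 1) ∧
  heightVal V = 2 ∧
  ∃ A : Fin (i + 2) → Finset V, GreedyAntichainSeq V A ∧
    (∀ j, (A j).Nonempty) ∧
    Finset.univ.biUnion A = Finset.univ ∧
    ((i : ℝ) + 2 = Real.logb 2 (Fintype.card V) + 1)

namespace GreedyLB

/-- `Rel k j m`: bottom element `j` is below top element `m`. -/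
def Rel (k j m : ℕ) : Prop := ∃ p, p ≤ k ∧ m < 2 ^ (k - p) ∧ j + 2 ^ (k - p) = m + 2 ^ k

structure GV (k : ℕ) where
  side : Bool
  idx : Fin (2 ^ k)
deriving DecidableEq, Fintype

instance (k : ℕ) : PartialOrder (GV k) where
  le a b := a = b ∨ (a.side = false ∧ b.side = true ∧ Rel k a.idx b.idx)
  le_refl a := Or.inl rfl
  le_trans a b c hab hbc := by
    rcases hab with rfl | ⟨ha, hb, hr⟩
    · exact hbc
    · rcases hbc with rfl | ⟨hb', _, _⟩
      · exact Or.inr ⟨ha, hb, hr⟩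
      · simp [hb] at hb'
  le_antisymm a b hab hba := by
    rcases hab with rfl | ⟨ha, hb, _⟩
    · rfl
    · rcases hba with h | ⟨hb', _, _⟩
      · exact h.symm
      · simp [hb] at hb'

lemma le_iff {k : ℕ} (a b : GV k) :
    a ≤ b ↔ a = b ∨ (a.side = false ∧ b.side = true ∧ Rel k a.idx b.idx) := Iff.rfl

def lvlF (k j : ℕ) : ℕ := k - Nat.size (2 ^ k - 1 - j)
def lvlT (k m : ℕ) : ℕ := if m = 0 then k + 1 else k - Nat.size m
def lvl {k : ℕ} (v : GV k) : ℕ := if v.side then lvlT k v.idx else lvlF k v.idx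

lemma two_pow_split (e : ℕ) (he : 1 ≤ e) : 2 ^ e = 2 * 2 ^ (e - 1) := by
  have h : e - 1 + 1 = e := by omega
  conv_lhs => rw [← h, pow_succ']

lemma size_ne {e m : ℕ} (h1 : 1 ≤ m) (hm : m < 2 ^ e) :
    Nat.size (2 ^ e - 1 - m) ≠ Nat.size m := by
  have he : 1 ≤ e := by
    rcases Nat.eq_zero_or_pos e with rfl | h
    · simp at hm; omega
    · exact h
  have h4 := two_pow_split e he
  by_cases hs : m < 2 ^ (e - 1)
  · have h2 : Nat.size m ≤ e - 1 := Nat.size_le.mpr hs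
    have h5 : e - 1 < Nat.size (2 ^ e - 1 - m) := Nat.lt_size.mpr (by omega)
    omega
  · have h2 : e - 1 < Nat.size m := Nat.lt_size.mpr (by omega)
    have h3 : Nat.size (2 ^ e - 1 - m) ≤ e - 1 := Nat.size_le.mpr (by omega)
    omega

lemma lvl_ne_of_rel {k j m : ℕ} (hj : j < 2 ^ k) (hr : Rel k j m) :
    lvlF k j ≠ lvlT k m := by
  obtain ⟨p, hp, hme, heq⟩ := hr
  set e := k - p with he
  have h2e : 2 ^ e ≤ 2 ^ k := Nat.pow_le_pow_right (by norm_num) (by omega)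
  have hc : 2 ^ k - 1 - j = 2 ^ e - 1 - m := by omega
  rw [lvlF, hc]
  by_cases h0 : m = 0
  · subst h0
    have h3 : Nat.size (2 ^ e - 1 - 0) ≤ k := Nat.size_le.mpr (by omega)
    have h4 : lvlT k 0 = k + 1 := if_pos rfl
    rw [h4]; omega
  · rw [lvlT, if_neg h0]
    have h1 := size_ne (by omega) hme
    have h2 : Nat.size (2 ^ e - 1 - m) ≤ k := Nat.size_le.mpr (by omega)
    have h3 : Nat.size m ≤ k := Nat.size_le.mpr (by omega)
    omega

lemma lvlF_le {k j : ℕ} : lvlF k j ≤ k := Nat.sub_le _ _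

lemma lvlT_le {k m : ℕ} : lvlT k m ≤ k + 1 := by unfold lvlT; split <;> omega

lemma lvl_le {k : ℕ} (v : GV k) : lvl v ≤ k + 1 := by
  unfold lvl; split
  · exact lvlT_le
  · exact le_trans lvlF_le (by omega)

lemma lvlF_ge {k j t : ℕ} (hj : j < 2 ^ k) (h : t ≤ lvlF k j) : 2 ^ k ≤ j + 2 ^ (k - t) := by
  have ht : t ≤ k := le_trans h lvlF_le
  have hsk : Nat.size (2 ^ k - 1 - j) ≤ k := Nat.size_le.mpr (by omega)
  have h1 : Nat.size (2 ^ k - 1 - j) ≤ k - t := by unfold lvlF at h; omega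
  have h2 : 2 ^ k - 1 - j < 2 ^ (k - t) := Nat.size_le.mp h1
  omega

lemma lvlT_ge {k m t : ℕ} (hm : m < 2 ^ k) (h : t ≤ lvlT k m) : m < 2 ^ (k - t) := by
  unfold lvlT at h
  split at h
  · rename_i h0
    subst h0
    exact lt_of_lt_of_le Nat.zero_lt_one Nat.one_le_two_pow
  · rename_i h0
    have hs : 1 ≤ Nat.size m := Nat.size_pos.mpr (by omega)
    have hsk : Nat.size m ≤ k := Nat.size_le.mpr hm
    have h2 : Nat.size m ≤ k - t := by omega
    exact Nat.size_le.mp h2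


lemma size_pow_sub_one (e : ℕ) : Nat.size (2 ^ e - 1) = e := by
  rcases Nat.eq_zero_or_pos e with rfl | he
  · simp
  · have h4 := two_pow_split e he
    have h5 : (1:ℕ) ≤ 2 ^ e := Nat.one_le_two_pow
    have h6 : (1:ℕ) ≤ 2 ^ (e - 1) := Nat.one_le_two_pow
    have h1 : Nat.size (2 ^ e - 1) ≤ e := Nat.size_le.mpr (by omega)
    have h2 : e - 1 < Nat.size (2 ^ e - 1) := Nat.lt_size.mpr (by omega)
    omega

lemma lvlF_val {k t r : ℕ} (ht : t ≤ k) (hr : r < 2 ^ (k - t - 1)) :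
    lvlF k (2 ^ k - 2 ^ (k - t) + r) = t := by
  have h2e : 2 ^ (k - t) ≤ 2 ^ k := Nat.pow_le_pow_right (by norm_num) (by omega)
  have h2e1 : 2 ^ (k - t - 1) ≤ 2 ^ (k - t) := Nat.pow_le_pow_right (by norm_num) (by omega)
  have h1 : (1:ℕ) ≤ 2 ^ (k - t) := Nat.one_le_two_pow
  have hc : 2 ^ k - 1 - (2 ^ k - 2 ^ (k - t) + r) = 2 ^ (k - t) - 1 - r := by omega
  unfold lvlF
  rw [hc]
  by_cases h0 : k - t = 0
  · have h7 : (2:ℕ) ^ (k - t) = 1 := by rw [h0, pow_zero]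
    have h8 : 2 ^ (k - t) - 1 - r = 0 := by omega
    rw [h8, Nat.size_zero]
    omega
  · have h4 := two_pow_split (k - t) (by omega)
    have h5 : k - t - 1 < Nat.size (2 ^ (k - t) - 1 - r) := Nat.lt_size.mpr (by omega)
    have h6 : Nat.size (2 ^ (k - t) - 1 - r) ≤ k - t := Nat.size_le.mpr (by omega)
    omega

lemma lvlT_val {k t m : ℕ} (ht : t < k) (h1 : 2 ^ (k - t - 1) ≤ m) (h2 : m < 2 ^ (k - t)) :
    lvlT k m = t := by
  have hp : (1:ℕ) ≤ 2 ^ (k - t - 1) := Nat.one_le_two_pow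
  have hm0 : m ≠ 0 := by omega
  rw [lvlT, if_neg hm0]
  have h3 : k - t - 1 < Nat.size m := Nat.lt_size.mpr h1
  have h4 : Nat.size m ≤ k - t := Nat.size_le.mpr h2
  omega

lemma lvlT_zero {k : ℕ} : lvlT k 0 = k + 1 := if_pos rfl

/-- the `t`-th greedy antichain -/
def A (k : ℕ) (t : Fin (k + 2)) : Finset (GV k) :=
  Finset.univ.filter (fun v => lvl v = t.val)

lemma mem_A {k : ℕ} {t : Fin (k + 2)} {v : GV k} : v ∈ A k t ↔ lvl v = t.val := by
  simp [A]

lemma A_antichain (k : ℕ) (t : Fin (k + 2)) :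
    IsAntichain (· ≤ ·) ((A k t : Finset (GV k)) : Set (GV k)) := by
  intro v hv w hw hne hle
  rcases hle with rfl | ⟨h1, h2, hr⟩
  · exact hne rfl
  · rw [Finset.mem_coe, mem_A] at hv hw
    rw [lvl, h1] at hv
    rw [lvl, h2] at hw
    simp only [Bool.false_eq_true, if_false, if_true] at hv hw
    exact lvl_ne_of_rel v.idx.isLt hr (hv.trans hw.symm)

lemma A_disjoint (k : ℕ) (t s : Fin (k + 2)) (hne : t ≠ s) : Disjoint (A k t) (A k s) := by
  rw [Finset.disjoint_left]
  intro v hv hv'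
  rw [mem_A] at hv hv'
  exact hne (Fin.ext (hv ▸ hv'))

lemma A_card_ge (k : ℕ) (t : Fin (k + 2)) : 2 ^ (k - t.val) ≤ (A k t).card := by
  have hcr : (Finset.range (2 ^ (k - t.val))).card = 2 ^ (k - t.val) := Finset.card_range _
  rw [← hcr]
  have h2e : 2 ^ (k - t.val) ≤ 2 ^ k := Nat.pow_le_pow_right (by norm_num) (by omega)
  have h1E : (1:ℕ) ≤ 2 ^ (k - t.val) := Nat.one_le_two_pow
  have h2e1 : 2 ^ (k - t.val - 1) ≤ 2 ^ (k - t.val) :=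
    Nat.pow_le_pow_right (by norm_num) (by omega)
  have hkpos : (0:ℕ) < 2 ^ k := (by positivity)
  apply Finset.card_le_card_of_injOn
    (fun r => if t.val ≤ k ∧ r < 2 ^ (k - t.val - 1)
      then ⟨false, ⟨(2 ^ k - 2 ^ (k - t.val) + r) % 2 ^ k, Nat.mod_lt _ hkpos⟩⟩
      else ⟨true, ⟨r % 2 ^ k, Nat.mod_lt _ hkpos⟩⟩)
  · intro r hr
    rw [Finset.mem_coe, Finset.mem_range] at hr
    rw [Finset.mem_coe, mem_A]
    beta_reduce
    split
    · rename_i h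
      have hlt : 2 ^ k - 2 ^ (k - t.val) + r < 2 ^ k := by omega
      show lvlF k ((2 ^ k - 2 ^ (k - t.val) + r) % 2 ^ k) = t.val
      rw [Nat.mod_eq_of_lt hlt]
      exact lvlF_val h.1 h.2
    · rename_i h
      show lvlT k (r % 2 ^ k) = t.val
      rw [Nat.mod_eq_of_lt (by omega)]
      by_cases ht : t.val ≤ k
      · have hr2 : 2 ^ (k - t.val - 1) ≤ r := by
          by_contra hc
          exact h ⟨ht, by omega⟩
        have htk : t.val < k := by
          by_contra hc
          have h9 : k - t.val = 0 := by omega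
          have h10 : k - t.val - 1 = 0 := by omega
          rw [h9, pow_zero] at hr
          rw [h10, pow_zero] at hr2
          omega
        exact lvlT_val htk hr2 hr
      · have ht1 : t.val = k + 1 := by omega
        have h9 : k - t.val = 0 := by omega
        rw [h9, pow_zero] at hr
        have hr0 : r = 0 := by omega
        rw [hr0, lvlT_zero, ht1]
  · intro r1 hr1 r2 hr2 heq
    simp only [Finset.coe_range, Set.mem_Iio] at hr1 hr2
    dsimp only at heq
    split at heq <;> split at heq <;>
      simp only [GV.mk.injEq, Fin.mk.injEq, Bool.false_eq_true, Bool.true_eq_false,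
        false_and, and_false] at heq
    · have e1 : 2 ^ k - 2 ^ (k - t.val) + r1 < 2 ^ k := by omega
      have e2 : 2 ^ k - 2 ^ (k - t.val) + r2 < 2 ^ k := by omega
      rw [Nat.mod_eq_of_lt e1, Nat.mod_eq_of_lt e2] at heq
      omega
    · rw [Nat.mod_eq_of_lt (by omega), Nat.mod_eq_of_lt (by omega)] at heq
      omega

lemma lvl_false {k : ℕ} {v : GV k} (h : v.side = false) : lvl v = lvlF k v.idx := by
  rw [lvl, h]; simp

lemma lvl_true {k : ℕ} {v : GV k} (h : v.side = true) : lvl v = lvlT k v.idx := by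
  rw [lvl, h]; simp

lemma B_card_le (k : ℕ) (t : Fin (k + 2)) (B : Finset (GV k))
    (hB : IsAntichain (· ≤ ·) ((B : Finset (GV k)) : Set (GV k)))
    (hlvl : ∀ v ∈ B, t.val ≤ lvl v) : B.card ≤ 2 ^ (k - t.val) := by
  have hcr : (Finset.range (2 ^ (k - t.val))).card = 2 ^ (k - t.val) := Finset.card_range _
  rw [← hcr]
  have h2e : 2 ^ (k - t.val) ≤ 2 ^ k := Nat.pow_le_pow_right (by norm_num) (by omega)
  -- the map: top elements go to their index, bottom elements are shifted
  set φ : GV k → ℕ :=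
    fun v => if v.side then v.idx.val else v.idx.val + 2 ^ (k - t.val) - 2 ^ k with hφ
  have hmapF : ∀ v ∈ B, v.side = false → 2 ^ k ≤ v.idx.val + 2 ^ (k - t.val) := by
    intro v hv hside
    have h1 := hlvl v hv
    rw [lvl_false hside] at h1
    exact lvlF_ge v.idx.isLt h1
  have hmapT : ∀ v ∈ B, v.side = true → v.idx.val < 2 ^ (k - t.val) := by
    intro v hv hside
    have h1 := hlvl v hv
    rw [lvl_true hside] at h1
    exact lvlT_ge v.idx.isLt h1
  -- cross pairs with equal φ would be comparable
  have hcross : ∀ v ∈ B, ∀ w ∈ B, v.side = false → w.side = true → φ v = φ w → False := by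
    intro v hv w hw hvs hws heq
    have h1 := hmapF v hv hvs
    have h2 := hmapT w hw hws
    rw [hφ] at heq
    simp only [hvs, hws, Bool.false_eq_true, if_false, if_true] at heq
    have ht : t.val ≤ k := by
      have h3 := hlvl v hv
      rw [lvl_false hvs] at h3
      exact le_trans h3 lvlF_le
    have hrel : Rel k v.idx w.idx := ⟨t.val, ht, h2, by omega⟩
    have hle : v ≤ w := Or.inr ⟨hvs, hws, hrel⟩
    exact hB (Finset.mem_coe.mpr hv) (Finset.mem_coe.mpr hw)
      (by intro h; rw [h, hws] at hvs; simp at hvs) hle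
  apply Finset.card_le_card_of_injOn φ
  · intro v hv
    rw [Finset.mem_coe, Finset.mem_range]
    by_cases hside : v.side
    · rw [hφ]; simp only [hside, if_true]
      exact hmapT v hv hside
    · have hside' : v.side = false := by simp at hside; exact hside
      have h1 := hmapF v hv hside'
      have h2 := v.idx.isLt
      rw [hφ]; simp only [hside', Bool.false_eq_true, if_false]
      omega
  · intro v hv w hw heq
    rw [Finset.mem_coe] at hv hw
    by_cases h1 : v.side <;> by_cases h2 : w.side
    · have h1' : v.side = true := h1
      have h2' : w.side = true := h2
      rw [hφ] at heq
      simp only [h1', h2', if_true] at heq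
      cases v; cases w
      simp_all [Fin.ext_iff]
    · have h2' : w.side = false := by simpa using h2
      exact absurd heq (fun hh => hcross w hw v hv h2' h1 hh.symm)
    · have h1' : v.side = false := by simpa using h1
      exact absurd heq (hcross v hv w hw h1' h2)
    · have h1' : v.side = false := by simpa using h1
      have h2' : w.side = false := by simpa using h2
      have e1 := hmapF v hv h1'
      have e2 := hmapF w hw h2'
      rw [hφ] at heq
      simp only [h1', h2', Bool.false_eq_true, if_false] at heq
      have h3 := v.idx.isLt
      have h4 := w.idx.isLt
      cases v; cases w
      simp_all [Fin.ext_iff]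
      omega

lemma chain_card_le {k : ℕ} (C : Finset (GV k))
    (hC : IsChain (· ≤ ·) ((C : Finset (GV k)) : Set (GV k))) : C.card ≤ 2 := by
  have h : C.card ≤ (Finset.univ : Finset Bool).card := by
    apply Finset.card_le_card_of_injOn (fun v => v.side) (fun _ _ => Finset.mem_univ _)
    intro v hv w hw hvw
    dsimp only at hvw
    by_contra hne
    have hcomp := hC hv hw hne
    rcases hcomp with h | h <;>
      rcases h with h' | ⟨ha, hb, _⟩
    · exact hne h'
    · rw [ha, hb] at hvw; simp at hvw
    · exact hne h'.symm
    · rw [ha, hb] at hvw; simp at hvw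
  simpa using h

lemma card_GV (k : ℕ) : Fintype.card (GV k) = 2 ^ (k + 1) := by
  have e : GV k ≃ Bool × Fin (2 ^ k) :=
    ⟨fun v => (v.side, v.idx), fun p => ⟨p.1, p.2⟩, fun _ => rfl, fun _ => rfl⟩
  rw [Fintype.card_congr e]
  simp [pow_succ]
  ring

end GreedyLB

/-- For every `i ≥ 1` there is a finite poset with exactly `2^(i+1)` elements, of height
`2`, admitting a greedy antichain sequence that partitions it into exactly `i + 2`
antichains; in particular the number of greedy antichains equals `log₂ |V| + 1`, a
`Θ(log |V|)` factor more than the optimal antichain partition into `2` antichains. -/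
theorem greedy_antichain_partition_log_lower_bound (i : ℕ) (hi : 1 ≤ i) :
    ∃ (V : Type) (f : Fintype V) (d : DecidableEq V) (p : PartialOrder V),
      @GreedyAntichainPartitionLowerBound V f d p i := by
  refine ⟨GreedyLB.GV i, inferInstance, inferInstance, inferInstance, ?_⟩
  open GreedyLB in
  refine ⟨card_GV i, ?_, ?_⟩
  · -- heightVal = 2
    unfold heightVal
    have hpos : (0:ℕ) < 2 ^ i := (by positivity)
    have h1 : (1:ℕ) ≤ 2 ^ i := Nat.one_le_two_pow
    set x : GV i := ⟨false, ⟨2 ^ i - 1, by omega⟩⟩ with hx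
    set y : GV i := ⟨true, ⟨0, hpos⟩⟩ with hy
    have hxy : x ≤ y := Or.inr ⟨rfl, rfl, ⟨i, le_refl i, by show 0 < 2 ^ (i - i); simp,
      by show (2 ^ i - 1) + 2 ^ (i - i) = 0 + 2 ^ i; rw [Nat.sub_self, pow_zero]; omega⟩⟩
    have hne : x ≠ y := by rw [hx, hy]; simp
    set S := {n : ℕ | ∃ C : Finset (GV i),
      IsChain (· ≤ ·) ((C : Finset (GV i)) : Set (GV i)) ∧ n = C.card} with hS
    have h2S : 2 ∈ S := by
      refine ⟨{x, y}, ?_, (Finset.card_pair hne).symm⟩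
      rw [Finset.coe_insert, Finset.coe_singleton]
      intro a ha b hb hab
      rcases ha with rfl | rfl <;> rcases hb with rfl | rfl
      · exact absurd rfl hab
      · exact Or.inl hxy
      · exact Or.inr hxy
      · exact absurd rfl hab
    have hub : ∀ n ∈ S, n ≤ 2 := by
      rintro n ⟨C, hC, rfl⟩
      exact chain_card_le C hC
    exact le_antisymm (csSup_le ⟨2, h2S⟩ hub) (le_csSup ⟨2, hub⟩ h2S)
  · refine ⟨A i, ⟨A_antichain i, A_disjoint i, ?_⟩, ?_, ?_, ?_⟩
    · -- maximality
      intro t B hBanti havoid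
      have hlvl : ∀ v ∈ B, t.val ≤ lvl v := by
        intro v hv
        by_contra h
        push_neg at h
        have hj : lvl v < i + 2 := by
          have := t.isLt
          omega
        exact havoid v hv ⟨lvl v, hj⟩ (Fin.lt_def.mpr h) (mem_A.mpr rfl)
      calc B.card ≤ 2 ^ (i - t.val) := B_card_le i t B hBanti hlvl
        _ ≤ (A i t).card := A_card_ge i t
    · intro t
      rw [← Finset.card_pos]
      exact lt_of_lt_of_le ((by positivity)) (A_card_ge i t)
    · apply Finset.eq_univ_iff_forall.mpr
      intro v
      rw [Finset.mem_biUnion]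
      exact ⟨⟨lvl v, by have := lvl_le v; omega⟩, Finset.mem_univ _, mem_A.mpr rfl⟩
    · rw [card_GV]
      push_cast
      rw [Real.logb_pow, Real.logb_self_eq_one (by norm_num : (1:ℝ) < 2)]
      push_cast
      ring
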